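/- In the reduced system at infinity, the point P₄ = (σ₂, σ₄, σ₅) = (−N/√6, √(1 − N²/6), 0) is an equilibrium whenever N² < 6, and the eigenvalues of the linearization of the reduced (σ₂,σ₄,σ₅)-flow there are (N² − 6)/6, (N² − 4)/6, and (1/3)N(2M + N) − (1/2)(MN + 2)γ. -/

import Mathlib

open Filter Set Topology

private noncomputable def Fm (γ M N s : ℝ) : ℝ × ℝ × ℝ → ℝ × ℝ × ℝ := fun p =>
  (p.1^3 + ((2 * p.2.2^2)/3 - 1) * p.1 - N * p.2.1^2 / s
      + (M * (4 - 3*γ) / (2 * s) + γ * p.1 / 2)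
          * (1 - p.1^2 - p.2.1^2 - p.2.2^2),
   (1/6) * p.2.1 * (s * N * p.1 + 3*(2-γ)*p.1^2
      + 3*γ*(1 - p.2.1^2) + (4 - 3*γ) * p.2.2^2),
   (1/6) * p.2.2 * (3*(2-γ)*p.1^2 - 3*γ*p.2.1^2 - (4 - 3*γ)*(1 - p.2.2^2)))

private lemma cubicDeriv (c₀ c₁ c₂ c₃ : ℝ) :
    HasDerivAt (fun t : ℝ => c₀ + c₁*t + c₂*t^2 + c₃*t^3) c₁ 0 := by
  have h : HasDerivAt (fun t : ℝ => c₀ + c₁*t + c₂*t^2 + c₃*t^3)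
      (c₁ * 1 + c₂ * (↑2 * 0^1) + c₃ * (↑3 * 0^2)) 0 :=
    ((((hasDerivAt_id (0:ℝ)).const_mul c₁).const_add c₀).add
      ((hasDerivAt_pow 2 (0:ℝ)).const_mul c₂)).add ((hasDerivAt_pow 3 (0:ℝ)).const_mul c₃)
  simpa using h

private lemma eigAux (f : Module.End ℝ (ℝ × ℝ × ℝ)) (lam : ℝ) (v : ℝ × ℝ × ℝ)
    (hv : v ≠ 0) (heq : f v = lam • v) : f.HasEigenvalue lam :=
  Module.End.hasEigenvalue_of_hasEigenvector
    ⟨Module.End.mem_eigenspace_iff.2 heq, hv⟩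

private lemma eig2 (f : Module.End ℝ (ℝ × ℝ × ℝ)) (A B C D lam : ℝ)
    (h1 : f (1,0,0) = (A, B, 0)) (h2 : f (0,1,0) = (C, D, 0))
    (hdet : (lam - A) * (lam - D) = C * B) : f.HasEigenvalue lam := by
  have expand : ∀ a b : ℝ, f ((a, b, 0) : ℝ × ℝ × ℝ) = (a*A + b*C, a*B + b*D, 0) := by
    intro a b
    have hv : ((a, b, 0) : ℝ × ℝ × ℝ) = a • ((1,0,0) : ℝ × ℝ × ℝ) + b • ((0,1,0) : ℝ × ℝ × ℝ) := by
      simp [Prod.ext_iff]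
    rw [hv, map_add, map_smul, map_smul, h1, h2]
    simp [Prod.ext_iff, smul_eq_mul]
  rcases eq_or_ne ((C, lam - A, 0) : ℝ × ℝ × ℝ) 0 with hv | hv
  · obtain ⟨hC, hA⟩ : C = 0 ∧ lam - A = 0 := by simpa [Prod.ext_iff] using hv
    rcases eq_or_ne ((lam - D, B, 0) : ℝ × ℝ × ℝ) 0 with hw | hw
    · obtain ⟨hD, hB⟩ : lam - D = 0 ∧ B = 0 := by simpa [Prod.ext_iff] using hw
      refine eigAux f lam (1,0,0) (by simp [Prod.ext_iff]) ?_
      rw [expand 1 0]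
      simp only [Prod.smul_mk, smul_eq_mul, Prod.mk.injEq]
      refine ⟨by linarith, by linarith [hB], by ring⟩
    · refine eigAux f lam (lam - D, B, 0) hw ?_
      rw [expand (lam - D) B]
      simp only [Prod.smul_mk, smul_eq_mul, Prod.mk.injEq]
      exact ⟨by linear_combination -hdet,
        by ring, by ring⟩
  · refine eigAux f lam (C, lam - A, 0) hv ?_
    rw [expand C (lam - A)]
    simp only [Prod.smul_mk, smul_eq_mul, Prod.mk.injEq]
    exact ⟨by ring, by linear_combination -hdet, by ring⟩

private lemma mainAux (γ M N s y : ℝ) (hs2 : s^2 = 6) (hs0 : s ≠ 0)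
    (hy : y^2 = 1 - N^2/6) :
    Fm γ M N s (-N/s, y, 0) = 0 ∧
    Module.End.HasEigenvalue
      ((fderiv ℝ (Fm γ M N s) ((-N/s, y, 0) : ℝ × ℝ × ℝ)) : ℝ × ℝ × ℝ →ₗ[ℝ] ℝ × ℝ × ℝ)
        ((N^2 - 6)/6) ∧
    Module.End.HasEigenvalue
      ((fderiv ℝ (Fm γ M N s) ((-N/s, y, 0) : ℝ × ℝ × ℝ)) : ℝ × ℝ × ℝ →ₗ[ℝ] ℝ × ℝ × ℝ)
        ((N^2 - 4)/6) ∧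
    Module.End.HasEigenvalue
      ((fderiv ℝ (Fm γ M N s) ((-N/s, y, 0) : ℝ × ℝ × ℝ)) : ℝ × ℝ × ℝ →ₗ[ℝ] ℝ × ℝ × ℝ)
        ((1/3) * N * (2*M + N) - (1/2) * (M*N + 2) * γ) := by
  have hsi : s⁻¹ = s / 6 := by
    field_simp
    linear_combination -hs2
  have hdiff : DifferentiableAt ℝ (Fm γ M N s) ((-N/s, y, 0) : ℝ × ℝ × ℝ) := by
    unfold Fm; fun_prop
  have hd := hdiff.hasFDerivAt
  have dirD : ∀ v : ℝ × ℝ × ℝ,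
      HasDerivAt (fun t : ℝ => Fm γ M N s (((-N/s, y, 0) : ℝ × ℝ × ℝ) + t • v))
        (fderiv ℝ (Fm γ M N s) ((-N/s, y, 0) : ℝ × ℝ × ℝ) v) 0 := by
    intro v
    have hline : HasDerivAt (fun t : ℝ => ((-N/s, y, 0) : ℝ × ℝ × ℝ) + t • v) v 0 := by
      simpa using ((hasDerivAt_id (0:ℝ)).smul_const v).const_add ((-N/s, y, 0) : ℝ × ℝ × ℝ)
    have hd' : HasFDerivAt (Fm γ M N s)
        (fderiv ℝ (Fm γ M N s) ((-N/s, y, 0) : ℝ × ℝ × ℝ))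
        ((fun t : ℝ => ((-N/s, y, 0) : ℝ × ℝ × ℝ) + t • v) 0) := by
      simpa using hd
    exact hd'.comp_hasDerivAt 0 hline

  have k1 : fderiv ℝ (Fm γ M N s) ((-N/s, y, 0) : ℝ × ℝ × ℝ) ((1:ℝ),(0:ℝ),(0:ℝ))
      = ((((N^2/2 - 1 + N*(M*(4-3*γ) - γ*N)/6), (y*s*N*(γ-1)/6), (0:ℝ))) : ℝ × ℝ × ℝ) := by
    have hcub : HasDerivAt (fun u : ℝ =>
        ((((1:ℝ)*s⁻¹*N + (2:ℝ)*s⁻¹*M + ((-1:ℝ)/2)*s⁻¹*γ*N + ((-3:ℝ)/2)*s⁻¹*γ*M + (-1:ℝ)*s⁻¹*(y)^2*N + (-2:ℝ)*s⁻¹*(y)^2*M + ((1:ℝ)/2)*s⁻¹*(y)^2*γ*N + ((3:ℝ)/2)*s⁻¹*(y)^2*γ*M + (-1:ℝ)*(s⁻¹)^3*(N)^3 + (-2:ℝ)*(s⁻¹)^3*M*(N)^2 + ((1:ℝ)/2)*(s⁻¹)^3*γ*(N)^3 + ((3:ℝ)/2)*(s⁻¹)^3*γ*M*(N)^2) + ((-1:ℝ)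 + ((1:ℝ)/2)*γ + ((-1:ℝ)/2)*(y)^2*γ + (3:ℝ)*(s⁻¹)^2*(N)^2 + (4:ℝ)*(s⁻¹)^2*M*N + ((-3:ℝ)/2)*(s⁻¹)^2*γ*(N)^2 + (-3:ℝ)*(s⁻¹)^2*γ*M*N)*u + ((-3:ℝ)*s⁻¹*N + (-2:ℝ)*s⁻¹*M + ((3:ℝ)/2)*s⁻¹*γ*N + ((3:ℝ)/2)*s⁻¹*γ*M)*u^2 + ((1:ℝ) + ((-1:ℝ)/2)*γ)*u^3,
          (((1:ℝ)/2)*y*γ + ((-1:ℝ)/2)*(y)^3*γ + (1:ℝ)*(s⁻¹)^2*y*(N)^2 + ((-1:ℝ)/2)*(s⁻¹)^2*y*γ*(N)^2 + ((-1:ℝ)/6)*s*s⁻¹*y*(N)^2) + ((-2:ℝ)*s⁻¹*y*N + (1:ℝ)*s⁻¹*y*γ*N + ((1:ℝ)/6)*s*y*N)*u + ((1:ℝ)*y + ((-1:ℝ)/2)*y*γ)*u^2 + ((0:ℝ))*u^3,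
          ((0:ℝ)) + ((0:ℝ))*u + ((0:ℝ))*u^2 + ((0:ℝ))*u^3) : ℝ × ℝ × ℝ))
        (((-1:ℝ) + ((1:ℝ)/2)*γ + ((-1:ℝ)/2)*(y)^2*γ + (3:ℝ)*(s⁻¹)^2*(N)^2 + (4:ℝ)*(s⁻¹)^2*M*N + ((-3:ℝ)/2)*(s⁻¹)^2*γ*(N)^2 + (-3:ℝ)*(s⁻¹)^2*γ*M*N, (-2:ℝ)*s⁻¹*y*N + (1:ℝ)*s⁻¹*y*γ*N + ((1:ℝ)/6)*s*y*N, (0:ℝ)) : ℝ × ℝ × ℝ) 0 :=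
      HasDerivAt.prodMk (cubicDeriv _ _ _ _) (HasDerivAt.prodMk (cubicDeriv _ _ _ _) (cubicDeriv _ _ _ _))
    have hfun : (fun u : ℝ => Fm γ M N s (((-N/s, y, 0) : ℝ × ℝ × ℝ) + u • ((1:ℝ),(0:ℝ),(0:ℝ))))
        = (fun u : ℝ =>
        ((((1:ℝ)*s⁻¹*N + (2:ℝ)*s⁻¹*M + ((-1:ℝ)/2)*s⁻¹*γ*N + ((-3:ℝ)/2)*s⁻¹*γ*M + (-1:ℝ)*s⁻¹*(y)^2*N + (-2:ℝ)*s⁻¹*(y)^2*M + ((1:ℝ)/2)*s⁻¹*(y)^2*γ*N + ((3:ℝ)/2)*s⁻¹*(y)^2*γ*M + (-1:ℝ)*(s⁻¹)^3*(N)^3 + (-2:ℝ)*(s⁻¹)^3*M*(N)^2 + ((1:ℝ)/2)*(s⁻¹)^3*γ*(N)^3 + ((3:ℝ)/2)*(s⁻¹)^3*γ*M*(N)^2) + ((-1:ℝ) + ((1:ℝ)/2)*γ + ((-1:ℝ)/2)*(y)^2*γ + (3:ℝ)*(s⁻¹)^2*(N)^2 + (4:ℝ)*(s⁻¹)^2*M*N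 + ((-3:ℝ)/2)*(s⁻¹)^2*γ*(N)^2 + (-3:ℝ)*(s⁻¹)^2*γ*M*N)*u + ((-3:ℝ)*s⁻¹*N + (-2:ℝ)*s⁻¹*M + ((3:ℝ)/2)*s⁻¹*γ*N + ((3:ℝ)/2)*s⁻¹*γ*M)*u^2 + ((1:ℝ) + ((-1:ℝ)/2)*γ)*u^3,
          (((1:ℝ)/2)*y*γ + ((-1:ℝ)/2)*(y)^3*γ + (1:ℝ)*(s⁻¹)^2*y*(N)^2 + ((-1:ℝ)/2)*(s⁻¹)^2*y*γ*(N)^2 + ((-1:ℝ)/6)*s*s⁻¹*y*(N)^2) + ((-2:ℝ)*s⁻¹*y*N + (1:ℝ)*s⁻¹*y*γ*N + ((1:ℝ)/6)*s*y*N)*u + ((1:ℝ)*y + ((-1:ℝ)/2)*y*γ)*u^2 + ((0:ℝ))*u^3,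
          ((0:ℝ)) + ((0:ℝ))*u + ((0:ℝ))*u^2 + ((0:ℝ))*u^3) : ℝ × ℝ × ℝ)) := by
      funext u
      simp only [Fm, Prod.mk_add_mk, Prod.smul_mk, smul_eq_mul, Prod.mk.injEq]
      refine ⟨by ring, by ring, by ring⟩
    have huniq := (dirD ((1:ℝ),(0:ℝ),(0:ℝ))).unique (hfun ▸ hcub)
    rw [huniq]
    simp only [Prod.mk.injEq]
    exact ⟨by linear_combination ((3:ℝ)*s⁻¹*(N)^2 + (4:ℝ)*s⁻¹*M*N + ((-3:ℝ)/2)*s⁻¹*γ*(N)^2 + (-3:ℝ)*s⁻¹*γ*M*N + ((1:ℝ)/2)*s*(N)^2 + ((2:ℝ)/3)*s*M*N + ((-1:ℝ)/4)*s*γ*(N)^2 + ((-1:ℝ)/2)*s*γ*M*N) * hsi + (((1:ℝ)/12)*(N)^2 + ((1:ℝ)/9)*M*N + ((-1:ℝ)/24)*γ*(N)^2 + ((-1:ℝ)/12)*γ*M*N) * hs2 + (((-1:ℝ)/2)*γ) * hy, by linear_combination ((-2:ℝ)*y*N + (1:ℝ)*y*γ*N) * hsi + ((0:ℝ)) * hs2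 + ((0:ℝ)) * hy, trivial⟩
  have k2 : fderiv ℝ (Fm γ M N s) ((-N/s, y, 0) : ℝ × ℝ × ℝ) ((0:ℝ),(1:ℝ),(0:ℝ))
      = ((((-(y*s/6)*(2*N + M*(4-3*γ) - γ*N)), (-γ*(1 - N^2/6)), (0:ℝ))) : ℝ × ℝ × ℝ) := by
    have hcub : HasDerivAt (fun u : ℝ =>
        ((((1:ℝ)*s⁻¹*N + (2:ℝ)*s⁻¹*M + ((-1:ℝ)/2)*s⁻¹*γ*N + ((-3:ℝ)/2)*s⁻¹*γ*M + (-1:ℝ)*s⁻¹*(y)^2*N + (-2:ℝ)*s⁻¹*(y)^2*M + ((1:ℝ)/2)*s⁻¹*(y)^2*γ*N + ((3:ℝ)/2)*s⁻¹*(y)^2*γ*M + (-1:ℝ)*(s⁻¹)^3*(N)^3 + (-2:ℝ)*(s⁻¹)^3*M*(N)^2 + ((1:ℝ)/2)*(s⁻¹)^3*γ*(N)^3 + ((3:ℝ)/2)*(s⁻¹)^3*γ*M*(N)^2) + ((-2:ℝ)*s⁻¹*y*N + (-4:ℝ)*s⁻¹*y*M + (1:ℝ)*s⁻¹*y*γ*N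 + (3:ℝ)*s⁻¹*y*γ*M)*u + ((-1:ℝ)*s⁻¹*N + (-2:ℝ)*s⁻¹*M + ((1:ℝ)/2)*s⁻¹*γ*N + ((3:ℝ)/2)*s⁻¹*γ*M)*u^2 + ((0:ℝ))*u^3,
          (((1:ℝ)/2)*y*γ + ((-1:ℝ)/2)*(y)^3*γ + (1:ℝ)*(s⁻¹)^2*y*(N)^2 + ((-1:ℝ)/2)*(s⁻¹)^2*y*γ*(N)^2 + ((-1:ℝ)/6)*s*s⁻¹*y*(N)^2) + (((1:ℝ)/2)*γ + ((-3:ℝ)/2)*(y)^2*γ + (1:ℝ)*(s⁻¹)^2*(N)^2 + ((-1:ℝ)/2)*(s⁻¹)^2*γ*(N)^2 + ((-1:ℝ)/6)*s*s⁻¹*(N)^2)*u + (((-3:ℝ)/2)*y*γ)*u^2 + (((-1:ℝ)/2)*γ)*u^3,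
          ((0:ℝ)) + ((0:ℝ))*u + ((0:ℝ))*u^2 + ((0:ℝ))*u^3) : ℝ × ℝ × ℝ))
        (((-2:ℝ)*s⁻¹*y*N + (-4:ℝ)*s⁻¹*y*M + (1:ℝ)*s⁻¹*y*γ*N + (3:ℝ)*s⁻¹*y*γ*M, ((1:ℝ)/2)*γ + ((-3:ℝ)/2)*(y)^2*γ + (1:ℝ)*(s⁻¹)^2*(N)^2 + ((-1:ℝ)/2)*(s⁻¹)^2*γ*(N)^2 + ((-1:ℝ)/6)*s*s⁻¹*(N)^2, (0:ℝ)) : ℝ × ℝ × ℝ) 0 :=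
      HasDerivAt.prodMk (cubicDeriv _ _ _ _) (HasDerivAt.prodMk (cubicDeriv _ _ _ _) (cubicDeriv _ _ _ _))
    have hfun : (fun u : ℝ => Fm γ M N s (((-N/s, y, 0) : ℝ × ℝ × ℝ) + u • ((0:ℝ),(1:ℝ),(0:ℝ))))
        = (fun u : ℝ =>
        ((((1:ℝ)*s⁻¹*N + (2:ℝ)*s⁻¹*M + ((-1:ℝ)/2)*s⁻¹*γ*N + ((-3:ℝ)/2)*s⁻¹*γ*M + (-1:ℝ)*s⁻¹*(y)^2*N + (-2:ℝ)*s⁻¹*(y)^2*M + ((1:ℝ)/2)*s⁻¹*(y)^2*γ*N + ((3:ℝ)/2)*s⁻¹*(y)^2*γ*M + (-1:ℝ)*(s⁻¹)^3*(N)^3 + (-2:ℝ)*(s⁻¹)^3*M*(N)^2 + ((1:ℝ)/2)*(s⁻¹)^3*γ*(N)^3 + ((3:ℝ)/2)*(s⁻¹)^3*γ*M*(N)^2) + ((-2:ℝ)*s⁻¹*y*N + (-4:ℝ)*s⁻¹*y*M + (1:ℝ)*s⁻¹*y*γ*N + (3:ℝ)*s⁻¹*y*γ*M)*u + ((-1:ℝ)*s⁻¹*N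 + (-2:ℝ)*s⁻¹*M + ((1:ℝ)/2)*s⁻¹*γ*N + ((3:ℝ)/2)*s⁻¹*γ*M)*u^2 + ((0:ℝ))*u^3,
          (((1:ℝ)/2)*y*γ + ((-1:ℝ)/2)*(y)^3*γ + (1:ℝ)*(s⁻¹)^2*y*(N)^2 + ((-1:ℝ)/2)*(s⁻¹)^2*y*γ*(N)^2 + ((-1:ℝ)/6)*s*s⁻¹*y*(N)^2) + (((1:ℝ)/2)*γ + ((-3:ℝ)/2)*(y)^2*γ + (1:ℝ)*(s⁻¹)^2*(N)^2 + ((-1:ℝ)/2)*(s⁻¹)^2*γ*(N)^2 + ((-1:ℝ)/6)*s*s⁻¹*(N)^2)*u + (((-3:ℝ)/2)*y*γ)*u^2 + (((-1:ℝ)/2)*γ)*u^3,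
          ((0:ℝ)) + ((0:ℝ))*u + ((0:ℝ))*u^2 + ((0:ℝ))*u^3) : ℝ × ℝ × ℝ)) := by
      funext u
      simp only [Fm, Prod.mk_add_mk, Prod.smul_mk, smul_eq_mul, Prod.mk.injEq]
      refine ⟨by ring, by ring, by ring⟩
    have huniq := (dirD ((0:ℝ),(1:ℝ),(0:ℝ))).unique (hfun ▸ hcub)
    rw [huniq]
    simp only [Prod.mk.injEq]
    exact ⟨by linear_combination ((-2:ℝ)*y*N + (-4:ℝ)*y*M + (1:ℝ)*y*γ*N + (3:ℝ)*y*γ*M) * hsi + ((0:ℝ)) * hs2 + ((0:ℝ)) * hy, by linear_combination ((1:ℝ)*s⁻¹*(N)^2 + ((-1:ℝ)/2)*s⁻¹*γ*(N)^2 + ((-1:ℝ)/12)*s*γ*(N)^2) * hsi + (((-1:ℝ)/72)*γ*(N)^2) * hs2 + (((-3:ℝ)/2)*γ) * hy, trivial⟩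
  have k3 : fderiv ℝ (Fm γ M N s) ((-N/s, y, 0) : ℝ × ℝ × ℝ) ((0:ℝ),(0:ℝ),(1:ℝ))
      = ((((0:ℝ), (0:ℝ), ((N^2 - 4)/6))) : ℝ × ℝ × ℝ) := by
    have hcub : HasDerivAt (fun u : ℝ =>
        ((((1:ℝ)*s⁻¹*N + (2:ℝ)*s⁻¹*M + ((-1:ℝ)/2)*s⁻¹*γ*N + ((-3:ℝ)/2)*s⁻¹*γ*M + (-1:ℝ)*s⁻¹*(y)^2*N + (-2:ℝ)*s⁻¹*(y)^2*M + ((1:ℝ)/2)*s⁻¹*(y)^2*γ*N + ((3:ℝ)/2)*s⁻¹*(y)^2*γ*M + (-1:ℝ)*(s⁻¹)^3*(N)^3 + (-2:ℝ)*(s⁻¹)^3*M*(N)^2 + ((1:ℝ)/2)*(s⁻¹)^3*γ*(N)^3 + ((3:ℝ)/2)*(s⁻¹)^3*γ*M*(N)^2) + ((0:ℝ))*u + (((-2:ℝ)/3)*s⁻¹*N + (-2:ℝ)*s⁻¹*M + ((1:ℝ)/2)*s⁻¹*γ*N + ((3:ℝ)/2)*s⁻¹*γ*M)*u^2 + ((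0:ℝ))*u^3,
          (((1:ℝ)/2)*y*γ + ((-1:ℝ)/2)*(y)^3*γ + (1:ℝ)*(s⁻¹)^2*y*(N)^2 + ((-1:ℝ)/2)*(s⁻¹)^2*y*γ*(N)^2 + ((-1:ℝ)/6)*s*s⁻¹*y*(N)^2) + ((0:ℝ))*u + (((2:ℝ)/3)*y + ((-1:ℝ)/2)*y*γ)*u^2 + ((0:ℝ))*u^3,
          ((0:ℝ)) + (((-2:ℝ)/3) + ((1:ℝ)/2)*γ + ((-1:ℝ)/2)*(y)^2*γ + (1:ℝ)*(s⁻¹)^2*(N)^2 + ((-1:ℝ)/2)*(s⁻¹)^2*γ*(N)^2)*u + ((0:ℝ))*u^2 + (((2:ℝ)/3) + ((-1:ℝ)/2)*γ)*u^3) : ℝ × ℝ × ℝ))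
        (((0:ℝ), (0:ℝ), ((-2:ℝ)/3) + ((1:ℝ)/2)*γ + ((-1:ℝ)/2)*(y)^2*γ + (1:ℝ)*(s⁻¹)^2*(N)^2 + ((-1:ℝ)/2)*(s⁻¹)^2*γ*(N)^2) : ℝ × ℝ × ℝ) 0 :=
      HasDerivAt.prodMk (cubicDeriv _ _ _ _) (HasDerivAt.prodMk (cubicDeriv _ _ _ _) (cubicDeriv _ _ _ _))
    have hfun : (fun u : ℝ => Fm γ M N s (((-N/s, y, 0) : ℝ × ℝ × ℝ) + u • ((0:ℝ),(0:ℝ),(1:ℝ))))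
        = (fun u : ℝ =>
        ((((1:ℝ)*s⁻¹*N + (2:ℝ)*s⁻¹*M + ((-1:ℝ)/2)*s⁻¹*γ*N + ((-3:ℝ)/2)*s⁻¹*γ*M + (-1:ℝ)*s⁻¹*(y)^2*N + (-2:ℝ)*s⁻¹*(y)^2*M + ((1:ℝ)/2)*s⁻¹*(y)^2*γ*N + ((3:ℝ)/2)*s⁻¹*(y)^2*γ*M + (-1:ℝ)*(s⁻¹)^3*(N)^3 + (-2:ℝ)*(s⁻¹)^3*M*(N)^2 + ((1:ℝ)/2)*(s⁻¹)^3*γ*(N)^3 + ((3:ℝ)/2)*(s⁻¹)^3*γ*M*(N)^2) + ((0:ℝ))*u + (((-2:ℝ)/3)*s⁻¹*N + (-2:ℝ)*s⁻¹*M + ((1:ℝ)/2)*s⁻¹*γ*N + ((3:ℝ)/2)*s⁻¹*γ*M)*u^2 + ((0:ℝ))*u^3,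
          (((1:ℝ)/2)*y*γ + ((-1:ℝ)/2)*(y)^3*γ + (1:ℝ)*(s⁻¹)^2*y*(N)^2 + ((-1:ℝ)/2)*(s⁻¹)^2*y*γ*(N)^2 + ((-1:ℝ)/6)*s*s⁻¹*y*(N)^2) + ((0:ℝ))*u + (((2:ℝ)/3)*y + ((-1:ℝ)/2)*y*γ)*u^2 + ((0:ℝ))*u^3,
          ((0:ℝ)) + (((-2:ℝ)/3) + ((1:ℝ)/2)*γ + ((-1:ℝ)/2)*(y)^2*γ + (1:ℝ)*(s⁻¹)^2*(N)^2 + ((-1:ℝ)/2)*(s⁻¹)^2*γ*(N)^2)*u + ((0:ℝ))*u^2 + (((2:ℝ)/3) + ((-1:ℝ)/2)*γ)*u^3) : ℝ × ℝ × ℝ)) := by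
      funext u
      simp only [Fm, Prod.mk_add_mk, Prod.smul_mk, smul_eq_mul, Prod.mk.injEq]
      refine ⟨by ring, by ring, by ring⟩
    have huniq := (dirD ((0:ℝ),(0:ℝ),(1:ℝ))).unique (hfun ▸ hcub)
    rw [huniq]
    simp only [Prod.mk.injEq]
    exact ⟨trivial, trivial, by linear_combination ((1:ℝ)*s⁻¹*(N)^2 + ((-1:ℝ)/2)*s⁻¹*γ*(N)^2 + ((1:ℝ)/6)*s*(N)^2 + ((-1:ℝ)/12)*s*γ*(N)^2) * hsi + (((1:ℝ)/36)*(N)^2 + ((-1:ℝ)/72)*γ*(N)^2) * hs2 + (((-1:ℝ)/2)*γ) * hy⟩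
  refine ⟨?_, ?_, ?_, ?_⟩
  · -- equilibrium
    unfold Fm
    have : ((0 : ℝ × ℝ × ℝ)) = ((0:ℝ), (0:ℝ), (0:ℝ)) := rfl
    rw [this]
    simp only [Prod.mk.injEq]
    refine ⟨by linear_combination ((1:ℝ)*N + (2:ℝ)*M + ((-1:ℝ)/2)*γ*N + ((-3:ℝ)/2)*γ*M + (-1:ℝ)*(y)^2*N + (-2:ℝ)*(y)^2*M + ((1:ℝ)/2)*(y)^2*γ*N + ((3:ℝ)/2)*(y)^2*γ*M + (-1:ℝ)*(s⁻¹)^2*(N)^3 + (-2:ℝ)*(s⁻¹)^2*M*(N)^2 + ((1:ℝ)/2)*(s⁻¹)^2*γ*(N)^3 + ((3:ℝ)/2)*(s⁻¹)^2*γ*M*(N)^2 + ((-1:ℝ)/6)*s*s⁻¹*(N)^3 + ((-1:ℝ)/3)*s*s⁻¹*M*(N)^2 + ((1:ℝ)/12)*s*s⁻¹*γ*(N)^3 + ((1:ℝ)/4)*s*s⁻¹*γ*M*(N)^2 + ((-1:ℝ)/36)*(s)^2*(N)^3 + ((-1:ℝ)/18)*(s)^2*M*(N)^2 + ((1:ℝ)/72)*(s)^2*γ*(N)^3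 + ((1:ℝ)/24)*(s)^2*γ*M*(N)^2) * hsi + (((-1:ℝ)/216)*s*(N)^3 + ((-1:ℝ)/108)*s*M*(N)^2 + ((1:ℝ)/432)*s*γ*(N)^3 + ((1:ℝ)/144)*s*γ*M*(N)^2) * hs2 + (((-1:ℝ)/6)*s*N + ((-1:ℝ)/3)*s*M + ((1:ℝ)/12)*s*γ*N + ((1:ℝ)/4)*s*γ*M) * hy, by linear_combination ((1:ℝ)*s⁻¹*y*(N)^2 + ((-1:ℝ)/2)*s⁻¹*y*γ*(N)^2 + ((-1:ℝ)/12)*s*y*γ*(N)^2) * hsi + (((-1:ℝ)/72)*y*γ*(N)^2) * hs2 + (((-1:ℝ)/2)*y*γ) * hy, by ring⟩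
  · -- eigenvalue (N²-6)/6
    refine eig2 _ (N^2/2 - 1 + N*(M*(4-3*γ) - γ*N)/6) (y*s*N*(γ-1)/6)
      (-(y*s/6)*(2*N + M*(4-3*γ) - γ*N)) (-γ*(1 - N^2/6)) _ k1 k2 ?_
    · linear_combination (((-1:ℝ)/18)*(y)^2*(N)^2 + ((-1:ℝ)/9)*(y)^2*M*N + ((1:ℝ)/12)*(y)^2*γ*(N)^2 + ((7:ℝ)/36)*(y)^2*γ*M*N + ((-1:ℝ)/36)*(y)^2*(γ)^2*(N)^2 + ((-1:ℝ)/12)*(y)^2*(γ)^2*M*N) * hs2 + (((-1:ℝ)/3)*(N)^2 + ((-2:ℝ)/3)*M*N + ((1:ℝ)/2)*γ*(N)^2 + ((7:ℝ)/6)*γ*M*N + ((-1:ℝ)/6)*(γ)^2*(N)^2 + ((-1:ℝ)/2)*(γ)^2*M*N) * hy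
  · -- eigenvalue (N²-4)/6 : eigenvector (0,0,1)
    refine eigAux _ _ ((0,0,1) : ℝ × ℝ × ℝ) (by simp [Prod.ext_iff]) ?_
    have : (((fderiv ℝ (Fm γ M N s) ((-N/s, y, 0) : ℝ × ℝ × ℝ)) :
        ℝ × ℝ × ℝ →ₗ[ℝ] ℝ × ℝ × ℝ)) ((0,0,1) : ℝ × ℝ × ℝ)
        = fderiv ℝ (Fm γ M N s) ((-N/s, y, 0) : ℝ × ℝ × ℝ) ((0,0,1) : ℝ × ℝ × ℝ) := rfl
    rw [this, k3]
    simp [Prod.ext_iff]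
  · -- eigenvalue (1/3)N(2M+N) - (1/2)(MN+2)γ
    refine eig2 _ (N^2/2 - 1 + N*(M*(4-3*γ) - γ*N)/6) (y*s*N*(γ-1)/6)
      (-(y*s/6)*(2*N + M*(4-3*γ) - γ*N)) (-γ*(1 - N^2/6)) _ k1 k2 ?_
    · linear_combination (((-1:ℝ)/18)*(y)^2*(N)^2 + ((-1:ℝ)/9)*(y)^2*M*N + ((1:ℝ)/12)*(y)^2*γ*(N)^2 + ((7:ℝ)/36)*(y)^2*γ*M*N + ((-1:ℝ)/36)*(y)^2*(γ)^2*(N)^2 + ((-1:ℝ)/12)*(y)^2*(γ)^2*M*N) * hs2 + (((-1:ℝ)/3)*(N)^2 + ((-2:ℝ)/3)*M*N + ((1:ℝ)/2)*γ*(N)^2 + ((7:ℝ)/6)*γ*M*N + ((-1:ℝ)/6)*(γ)^2*(N)^2 + ((-1:ℝ)/2)*(γ)^2*M*N) * hy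

theorem stmt15 (γ M N : ℝ) (hγ0 : 0 < γ) (hγ2 : γ < 2) (hN : N^2 < 6) :
    let F : ℝ × ℝ × ℝ → ℝ × ℝ × ℝ := fun p =>
      (p.1^3 + ((2 * p.2.2^2)/3 - 1) * p.1 - N * p.2.1^2 / Real.sqrt 6
          + (M * (4 - 3*γ) / (2 * Real.sqrt 6) + γ * p.1 / 2)
              * (1 - p.1^2 - p.2.1^2 - p.2.2^2),
       (1/6) * p.2.1 * (Real.sqrt 6 * N * p.1 + 3*(2-γ)*p.1^2
          + 3*γ*(1 - p.2.1^2) + (4 - 3*γ) * p.2.2^2),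
       (1/6) * p.2.2 * (3*(2-γ)*p.1^2 - 3*γ*p.2.1^2 - (4 - 3*γ)*(1 - p.2.2^2)))
    let P₄ : ℝ × ℝ × ℝ := (-N / Real.sqrt 6, Real.sqrt (1 - N^2/6), 0)
    F P₄ = 0 ∧
    Module.End.HasEigenvalue
      ((fderiv ℝ F P₄) : ℝ × ℝ × ℝ →ₗ[ℝ] ℝ × ℝ × ℝ) ((N^2 - 6)/6) ∧
    Module.End.HasEigenvalue
      ((fderiv ℝ F P₄) : ℝ × ℝ × ℝ →ₗ[ℝ] ℝ × ℝ × ℝ) ((N^2 - 4)/6) ∧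
    Module.End.HasEigenvalue
      ((fderiv ℝ F P₄) : ℝ × ℝ × ℝ →ₗ[ℝ] ℝ × ℝ × ℝ)
        ((1/3) * N * (2*M + N) - (1/2) * (M*N + 2) * γ) := by
  intro F P₄
  have hs2 : (Real.sqrt 6)^2 = 6 := Real.sq_sqrt (by norm_num)
  have hs0 : Real.sqrt 6 ≠ 0 := by
    have : (0:ℝ) < Real.sqrt 6 := Real.sqrt_pos.mpr (by norm_num)
    exact ne_of_gt this
  have hy : (Real.sqrt (1 - N^2/6))^2 = 1 - N^2/6 :=
    Real.sq_sqrt (by nlinarith)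
  exact mainAux γ M N (Real.sqrt 6) (Real.sqrt (1 - N^2/6)) hs2 hs0 hy
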